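/- Let p > 1 and ε ∈ (0,1). Assume ‖h‖^{2p} is integrable with ∫_M ‖h‖^{2p} dμ > 0, that ∫_M t dμ > 0, and that the hypotheses (HM), (R) and the pinching condition (Λ_{p,ε}) hold. Then (1−ε)² · ((1/V) ∫_M s dμ)² / ‖h‖_{2p}² ≤ ‖X‖₂² ≤ (1/(1−ε)) · ((1/V) ∫_M s dμ)² / ‖h‖_{2p}², where ‖X‖₂² = (1/V) ∫_M ‖X‖² dμ. (This is estimate (4.4) of Lemma 4.1 of the paper: under the pinching, ‖X‖₂ is comparable to the radius r = |(1/V)∫ tr(S)| / ‖H_S‖_{2p}.) -/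

import Mathlib

open MeasureTheory

/-- Estimate (4.4) of Lemma 4.1: under the pinching condition `(Λ_{p,ε})`,
`(1−ε)² ((1/V)∫s)²/‖h‖_{2p}² ≤ ‖X‖₂² ≤ (1/(1−ε)) ((1/V)∫s)²/‖h‖_{2p}²`. -/
theorem L2_estimate_X_via_s
    {M : Type*} [MeasurableSpace M] {E : Type*}
    [NormedAddCommGroup E] [InnerProductSpace ℝ E]
    (μ : Measure M) [IsFiniteMeasure μ] (hμ : μ Set.univ ≠ 0)
    (X h : M → E) (s t : M → ℝ) (lam p ε : ℝ)
    (hlam : 0 < lam) (hp : 1 < p) (hε0 : 0 < ε) (hε1 : ε < 1)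
    (hX : AEStronglyMeasurable X μ) (hh : AEStronglyMeasurable h μ)
    (hX2 : Integrable (fun x => ‖X x‖ ^ 2) μ)
    (hh2 : Integrable (fun x => ‖h x‖ ^ 2) μ)
    (hh2p : Integrable (fun x => ‖h x‖ ^ (2 * p)) μ)
    (hh2ppos : 0 < ∫ x, ‖h x‖ ^ (2 * p) ∂μ)
    (htpos : 0 < ∫ x, t x ∂μ)
    (hs : Integrable s μ) (ht : Integrable t μ)
    (V : ℝ) (hV : V = (μ Set.univ).toReal)
    (Np : ℝ) (hNp : Np = ((1 / V) * ∫ x, ‖h x‖ ^ (2 * p) ∂μ) ^ (1 / p))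
    (HM : ∫ x, (inner ℝ (X x) (h x) : ℝ) ∂μ = - ∫ x, s x ∂μ)
    (hR : lam * ∫ x, ‖X x‖ ^ 2 ∂μ ≤ ∫ x, t x ∂μ)
    (pinch : lam * (∫ x, s x ∂μ) ^ 2 ≥ (1 - ε) * (∫ x, t x ∂μ) * Np * V) :
    (1 - ε) ^ 2 * (((1 / V) * ∫ x, s x ∂μ) ^ 2 / Np) ≤ (1 / V) * ∫ x, ‖X x‖ ^ 2 ∂μ ∧
      (1 / V) * ∫ x, ‖X x‖ ^ 2 ∂μ ≤ (1 / (1 - ε)) * (((1 / V) * ∫ x, s x ∂μ) ^ 2 / Np) := by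
  have hp0 : 0 < p := lt_trans one_pos hp
  have hVpos : 0 < V := by
    rw [hV]; exact ENNReal.toReal_pos hμ (measure_ne_top μ _)
  set S := ∫ x, s x ∂μ with hS
  set T := ∫ x, t x ∂μ with hT
  set A := ∫ x, ‖X x‖ ^ 2 ∂μ with hA
  set B := ∫ x, ‖h x‖ ^ 2 ∂μ with hB
  set I2p := ∫ x, ‖h x‖ ^ (2 * p) ∂μ with hI2p
  have hApos : 0 ≤ A := by
    rw [hA]; exact integral_nonneg fun x => by positivity
  have hBpos : 0 ≤ B := by
    rw [hB]; exact integral_nonneg fun x => by positivity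
  clear_value S T A B I2p
  have hNpos : 0 < Np := by
    rw [hNp]
    exact Real.rpow_pos_of_pos (by positivity) _
  -- Memℒp facts
  have hXm : MemLp X 2 μ := (memLp_two_iff_integrable_sq_norm hX).2 hX2
  have hhm : MemLp h 2 μ := (memLp_two_iff_integrable_sq_norm hh).2 hh2
  have hXn : MemLp (fun x => ‖X x‖) (ENNReal.ofReal 2) μ := by
    rw [show ENNReal.ofReal 2 = 2 by norm_num]
    exact hXm.norm
  have hhn : MemLp (fun x => ‖h x‖) (ENNReal.ofReal 2) μ := by
    rw [show ENNReal.ofReal 2 = 2 by norm_num]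
    exact hhm.norm
  -- Cauchy–Schwarz : S^2 ≤ A * B
  have hmul : Integrable (fun x => ‖X x‖ * ‖h x‖) μ := by
    refine Integrable.mono' ((hX2.add hh2).div_const 2) (hX.norm.mul hh.norm)
      (Filter.Eventually.of_forall fun x => ?_)
    simp only [Pi.add_apply]
    rw [Real.norm_of_nonneg (by positivity)]
    nlinarith [sq_nonneg (‖X x‖ - ‖h x‖), sq_nonneg (‖X x‖ + ‖h x‖)]
  have hinner : Integrable (fun x => (inner ℝ (X x) (h x) : ℝ)) μ :=
    hmul.mono' (hX.inner hh) (Filter.Eventually.of_forall fun x => by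
      simpa using norm_inner_le_norm (𝕜 := ℝ) (X x) (h x))
  have holder22 : ∫ x, ‖X x‖ * ‖h x‖ ∂μ ≤
      (∫ x, ‖X x‖ ^ (2 : ℝ) ∂μ) ^ ((1:ℝ)/2) * (∫ x, ‖h x‖ ^ (2 : ℝ) ∂μ) ^ ((1:ℝ)/2) :=
    integral_mul_le_Lp_mul_Lq_of_nonneg (Real.holderConjugate_iff.mpr ⟨one_lt_two, by norm_num⟩)
      (Filter.Eventually.of_forall fun x => norm_nonneg _)
      (Filter.Eventually.of_forall fun x => norm_nonneg _) hXn hhn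
  have hrX : (∫ x, ‖X x‖ ^ (2 : ℝ) ∂μ) = A := by
    rw [hA]; congr 1; funext x
    rw [show (2:ℝ) = ((2:ℕ):ℝ) by norm_num, Real.rpow_natCast]
  have hrh : (∫ x, ‖h x‖ ^ (2 : ℝ) ∂μ) = B := by
    rw [hB]; congr 1; funext x
    rw [show (2:ℝ) = ((2:ℕ):ℝ) by norm_num, Real.rpow_natCast]
  rw [hrX, hrh] at holder22
  have hCS : S ^ 2 ≤ A * B := by
    have h1 : |S| ≤ ∫ x, ‖X x‖ * ‖h x‖ ∂μ := by
      rw [show S = -∫ x, (inner ℝ (X x) (h x) : ℝ) ∂μ by rw [HM]; ring, abs_neg]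
      have hn := norm_integral_le_integral_norm (μ := μ) (fun x => (inner ℝ (X x) (h x) : ℝ))
      simp only [Real.norm_eq_abs] at hn
      calc |∫ x, (inner ℝ (X x) (h x) : ℝ) ∂μ| ≤ ∫ x, |(inner ℝ (X x) (h x) : ℝ)| ∂μ := hn
        _ ≤ ∫ x, ‖X x‖ * ‖h x‖ ∂μ := by
            refine integral_mono hinner.abs hmul fun x => ?_
            exact abs_real_inner_le_norm _ _
    have h2 : |S| ≤ A ^ ((1:ℝ)/2) * B ^ ((1:ℝ)/2) := le_trans h1 holder22
    have h3 : (A ^ ((1:ℝ)/2) * B ^ ((1:ℝ)/2)) ^ 2 = A * B := by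
      rw [mul_pow, ← Real.rpow_natCast (A ^ ((1:ℝ)/2)) 2, ← Real.rpow_natCast (B ^ ((1:ℝ)/2)) 2,
        ← Real.rpow_mul hApos, ← Real.rpow_mul hBpos]
      norm_num
    calc S ^ 2 = |S| ^ 2 := (sq_abs S).symm
      _ ≤ (A ^ ((1:ℝ)/2) * B ^ ((1:ℝ)/2)) ^ 2 := by
          exact pow_le_pow_left₀ (abs_nonneg S) h2 2
      _ = A * B := h3
  -- Hölder : B ≤ Np * V
  have hq : Real.HolderConjugate p (p / (p - 1)) := Real.HolderConjugate.conjExponent hp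
  have hP2p : MemLp h (ENNReal.ofReal (2 * p)) μ := by
    have h1 : MemLp (fun x => ‖h x‖ ^ (2 * p)) 1 μ := memLp_one_iff_integrable.2 hh2p
    have hne0 : ENNReal.ofReal (2 * p) ≠ 0 := by
      simp [ENNReal.ofReal_eq_zero]; positivity
    have hnetop : ENNReal.ofReal (2 * p) ≠ ⊤ := ENNReal.ofReal_ne_top
    rw [← memLp_norm_rpow_iff (q := ENNReal.ofReal (2 * p)) hh hne0 hnetop]
    rw [ENNReal.toReal_ofReal (by positivity), ENNReal.div_self hne0 hnetop]
    exact h1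
  have hhp : MemLp (fun x => ‖h x‖ ^ 2) (ENNReal.ofReal p) μ := by
    have h2 := (memLp_norm_rpow_iff (q := (2 : ENNReal)) (p := ENNReal.ofReal (2 * p))
      hh two_ne_zero ENNReal.ofNat_ne_top).2 hP2p
    have heq : ENNReal.ofReal (2 * p) / 2 = ENNReal.ofReal p := by
      rw [show (2:ENNReal) = ENNReal.ofReal 2 by norm_num,
        ← ENNReal.ofReal_div_of_pos two_pos]
      congr 1
      field_simp
    rw [heq] at h2
    convert h2 using 2 with x
    rw [ENNReal.toReal_ofNat, show ((2:ℝ)) = ((2:ℕ):ℝ) by norm_num, Real.rpow_natCast]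
  have hone : MemLp (fun _ : M => (1:ℝ)) (ENNReal.ofReal (p / (p - 1))) μ := memLp_const 1
  have holderp : B ≤ I2p ^ ((1:ℝ)/p) * V ^ (1 - (1:ℝ)/p) := by
    have h0 := integral_mul_le_Lp_mul_Lq_of_nonneg hq
      (f := fun x => ‖h x‖ ^ 2) (g := fun _ => (1:ℝ))
      (Filter.Eventually.of_forall fun x => by positivity)
      (Filter.Eventually.of_forall fun x => zero_le_one) hhp hone
    simp only [mul_one, Real.one_rpow] at h0
    have hfp : (∫ x, ((‖h x‖ ^ 2 : ℝ)) ^ p ∂μ) = I2p := by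
      rw [hI2p]; congr 1; funext x
      rw [← Real.rpow_natCast (‖h x‖) 2, ← Real.rpow_mul (norm_nonneg _)]
      norm_num
    rw [hfp] at h0
    simp only [integral_const, smul_eq_mul, mul_one, measureReal_def, ← hV] at h0
    have hq' : (1:ℝ) / (p / (p - 1)) = 1 - 1/p := by
      field_simp
    rw [hq'] at h0
    rw [hB]
    exact h0
  have hBNpV : B ≤ Np * V := by
    have hNpV : Np * V = I2p ^ ((1:ℝ)/p) * V ^ (1 - (1:ℝ)/p) := by
      rw [hNp,
        Real.mul_rpow (one_div_pos.mpr hVpos).le hh2ppos.le,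
        show (1:ℝ)/V = V ^ (-1 : ℝ) by rw [Real.rpow_neg_one]; ring,
        ← Real.rpow_mul hVpos.le]
      have hv : V ^ ((-1:ℝ) * (1/p)) * V = V ^ (1 - (1:ℝ)/p) := by
        rw [← Real.rpow_add_one hVpos.ne']
        congr 1
        ring
      calc V ^ ((-1:ℝ) * (1/p)) * I2p ^ ((1:ℝ)/p) * V
          = I2p ^ ((1:ℝ)/p) * (V ^ ((-1:ℝ) * (1/p)) * V) := by ring
        _ = I2p ^ ((1:ℝ)/p) * V ^ (1 - (1:ℝ)/p) := by rw [hv]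
    rw [hNpV]
    exact holderp
  -- key inequalities
  have key1 : S ^ 2 ≤ A * (Np * V) :=
    le_trans hCS (mul_le_mul_of_nonneg_left hBNpV hApos)
  have key2 : (1 - ε) * A * Np * V ≤ S ^ 2 := by
    have hnn : 0 ≤ (1 - ε) * Np * V :=
      mul_nonneg (mul_nonneg (by linarith) hNpos.le) hVpos.le
    have h1 : lam * ((1 - ε) * A * Np * V) ≤ lam * S ^ 2 := by
      calc lam * ((1 - ε) * A * Np * V) = (lam * A) * ((1 - ε) * Np * V) := by ring
        _ ≤ T * ((1 - ε) * Np * V) := mul_le_mul_of_nonneg_right hR hnn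
        _ = (1 - ε) * T * Np * V := by ring
        _ ≤ lam * S ^ 2 := pinch
    exact le_of_mul_le_mul_left h1 hlam
  have h1ε : (0:ℝ) < 1 - ε := by linarith
  constructor
  · have hgoal : (1 - ε) ^ 2 * (((1 / V) * S) ^ 2 / Np) ≤ (1 / V) * A := by
      rw [mul_div_assoc' , div_le_iff₀ hNpos]
      have hε2 : (1 - ε) ^ 2 ≤ 1 := pow_le_one₀ (by linarith) (by linarith)
      have : (1 - ε) ^ 2 * S ^ 2 ≤ A * (Np * V) :=
        calc (1 - ε) ^ 2 * S ^ 2 ≤ 1 * S ^ 2 :=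
              mul_le_mul_of_nonneg_right hε2 (sq_nonneg S)
          _ = S ^ 2 := one_mul _
          _ ≤ A * (Np * V) := key1
      have hexp : (1 - ε) ^ 2 * ((1 / V) * S) ^ 2 = ((1 - ε) ^ 2 * S ^ 2) / V ^ 2 := by
        field_simp
      rw [hexp]
      rw [div_le_iff₀ (by positivity : (0:ℝ) < V ^ 2)]
      calc (1 - ε) ^ 2 * S ^ 2 ≤ A * (Np * V) := this
        _ = 1 / V * A * Np * V ^ 2 := by field_simp
    exact hgoal
  · have hstep : (1 - ε) * ((1 / V) * A) ≤ ((1 / V) * S) ^ 2 / Np := by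
      rw [le_div_iff₀ hNpos]
      have hexp : ((1 / V) * S) ^ 2 = S ^ 2 / V ^ 2 := by field_simp
      rw [hexp, le_div_iff₀ (by positivity : (0:ℝ) < V ^ 2)]
      calc (1 - ε) * (1 / V * A) * Np * V ^ 2 = (1 - ε) * A * Np * V := by
            field_simp
        _ ≤ S ^ 2 := key2
    calc 1 / V * A = 1 / (1 - ε) * ((1 - ε) * (1 / V * A)) := by
          field_simp
      _ ≤ 1 / (1 - ε) * (((1 / V) * S) ^ 2 / Np) :=
          mul_le_mul_of_nonneg_left hstep (one_div_pos.mpr h1ε).le
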